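/- Let (x_n) be a frame in H with bounds A, B, i.e. A‖x‖² ≤ ∑_n |⟨x, x_n⟩|² ≤ B‖x‖² for all x ∈ H. Then (x_n) is c-equivalent to a tight frame, where c = (B/A)^{1/2}; that is, there exists a tight frame (y_n) in a Hilbert space K and an isomorphism T from the closed span of (x_n) onto the closed span of (y_n) with T x_n = y_n for all n and ‖T‖·‖T⁻¹‖ ≤ c. -/

import Mathlib

open scoped RealInnerProductSpace ENNReal

/-- The analysis operator of a frame, as a linear map into `ℓ²`. -/
private noncomputable def frameAnalysis {H : Type*} [NormedAddCommGroup H]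
    [InnerProductSpace ℝ H] (x : ℕ → H)
    (hmem : ∀ v : H, Memℓp (fun n => ⟪v, x n⟫) 2) :
    H →ₗ[ℝ] lp (fun _ : ℕ => ℝ) 2 where
  toFun v := ⟨fun n => ⟪v, x n⟫, hmem v⟩
  map_add' u v := lp.ext (funext fun n => inner_add_left _ _ _)
  map_smul' c v := lp.ext (funext fun n => by
    simp [real_inner_smul_left])

private theorem lp_norm_sq (f : lp (fun _ : ℕ => ℝ) 2) : ‖f‖ ^ 2 = ∑' n, (f n) ^ 2 := by
  rw [← real_inner_self_eq_norm_sq, lp.inner_eq_tsum]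
  exact tsum_congr fun n => by simp [RCLike.inner_apply, sq]

set_option synthInstance.maxHeartbeats 1000000 in
set_option maxHeartbeats 4000000 in
/-- A frame with bounds `A, B` is `√(B/A)`-equivalent to a tight frame: there is a
Hilbert space `K` (realized as a subspace of `ℓ₂`), a tight frame `(y n)` in `K`, and an
isomorphism `T` of the closed linear span of `(x n)` onto `K` (the closed span of `(y n)`,
which is dense in `K`) with `T (x n) = y n` and `‖T‖ ‖T⁻¹‖ ≤ √(B/A)`. -/
theorem frame_equivalent_tight_frame
    {H : Type*} [NormedAddCommGroup H] [InnerProductSpace ℝ H] [CompleteSpace H]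
    (x : ℕ → H) (A B : ℝ) (hA : 0 < A) (hAB : A ≤ B)
    (hframe : ∀ v : H,
      A * ‖v‖ ^ 2 ≤ ∑' n, ⟪v, x n⟫ ^ 2 ∧ ∑' n, ⟪v, x n⟫ ^ 2 ≤ B * ‖v‖ ^ 2) :
    ∃ (K : Submodule ℝ (lp (fun _ : ℕ => ℝ) 2)) (y : ℕ → K)
      (T : (Submodule.span ℝ (Set.range x)).topologicalClosure ≃L[ℝ] K),
      (∀ v : K, ∑' n, ⟪v, y n⟫ ^ 2 = ‖v‖ ^ 2) ∧
      (∀ n, T ⟨x n, Submodule.le_topologicalClosure _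
          (Submodule.subset_span (Set.mem_range_self n))⟩ = y n) ∧
      ‖(T : (Submodule.span ℝ (Set.range x)).topologicalClosure →L[ℝ] K)‖ *
        ‖(T.symm : K →L[ℝ] (Submodule.span ℝ (Set.range x)).topologicalClosure)‖ ≤
        Real.sqrt (B / A) := by
  classical
  have hB : (0:ℝ) < B := lt_of_lt_of_le hA hAB
  have hsA : (0:ℝ) < Real.sqrt A := Real.sqrt_pos.mpr hA
  -- the frame coefficients are square-summable
  have hsum : ∀ v : H, Summable fun n => ⟪v, x n⟫ ^ 2 := by
    intro v
    by_cases hv : v = 0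
    · subst hv; simpa using summable_zero
    · by_contra hns
      have h0 : ∑' n, ⟪v, x n⟫ ^ 2 = 0 := tsum_eq_zero_of_not_summable hns
      have h1 := (hframe v).1
      rw [h0] at h1
      have hv' : ‖v‖ = 0 := by
        by_contra h
        have hp : 0 < ‖v‖ := lt_of_le_of_ne (norm_nonneg v) (Ne.symm h)
        nlinarith [mul_pos hA (mul_pos hp hp)]
      exact hv (norm_eq_zero.mp hv')
  have hmem : ∀ v : H, Memℓp (fun n => ⟪v, x n⟫) 2 := by
    intro v
    apply memℓp_gen
    have : (fun n => ‖⟪v, x n⟫‖ ^ (2 : ℝ≥0∞).toReal) = fun n => ⟪v, x n⟫ ^ 2 := by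
      funext n
      rw [show ((2 : ℝ≥0∞).toReal) = ((2 : ℕ) : ℝ) by norm_num, Real.rpow_natCast]
      simp [sq_abs]
    rw [this]
    exact hsum v
  -- the analysis operator
  have hbound : ∀ v : H, ‖frameAnalysis x hmem v‖ ≤ Real.sqrt B * ‖v‖ := by
    intro v
    have h2 : ‖frameAnalysis x hmem v‖ ^ 2 = ∑' n, ⟪v, x n⟫ ^ 2 := by
      rw [lp_norm_sq]; rfl
    have h3 : ‖frameAnalysis x hmem v‖ ^ 2 ≤ B * ‖v‖ ^ 2 := h2 ▸ (hframe v).2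
    calc ‖frameAnalysis x hmem v‖
        = Real.sqrt (‖frameAnalysis x hmem v‖ ^ 2) := (Real.sqrt_sq (norm_nonneg _)).symm
      _ ≤ Real.sqrt (B * ‖v‖ ^ 2) := Real.sqrt_le_sqrt h3
      _ = Real.sqrt B * ‖v‖ := by
          rw [Real.sqrt_mul hB.le, Real.sqrt_sq (norm_nonneg _)]
  set U : H →L[ℝ] lp (fun _ : ℕ => ℝ) 2 :=
    LinearMap.mkContinuous (frameAnalysis x hmem) (Real.sqrt B) hbound with hU
  have hUapp : ∀ (v : H) (n : ℕ), U v n = ⟪v, x n⟫ := fun _ _ => rfl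
  have htsum : ∀ v : H, ∑' n, ⟪v, x n⟫ ^ 2 = ‖U v‖ ^ 2 := by
    intro v
    rw [lp_norm_sq]; rfl
  have hUb : ∀ v : H, ‖U v‖ ≤ Real.sqrt B * ‖v‖ := hbound
  have hUa : ∀ v : H, Real.sqrt A * ‖v‖ ≤ ‖U v‖ := by
    intro v
    have h1 : A * ‖v‖ ^ 2 ≤ ‖U v‖ ^ 2 := (htsum v) ▸ (hframe v).1
    calc Real.sqrt A * ‖v‖ = Real.sqrt (A * ‖v‖ ^ 2) := by
          rw [Real.sqrt_mul hA.le, Real.sqrt_sq (norm_nonneg _)]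
      _ ≤ Real.sqrt (‖U v‖ ^ 2) := Real.sqrt_le_sqrt h1
      _ = ‖U v‖ := Real.sqrt_sq (norm_nonneg _)
  -- the frame operator
  set S : H →L[ℝ] H := (ContinuousLinearMap.adjoint U).comp U with hSdef
  have hS : ∀ v w : H, ⟪S v, w⟫ = ⟪U v, U w⟫ := fun v w =>
    ContinuousLinearMap.adjoint_inner_left U w (U v)
  have hSsymm : ∀ p q : H, ⟪S p, q⟫ = ⟪p, S q⟫ := by
    intro p q
    calc ⟪S p, q⟫ = ⟪U p, U q⟫ := hS p q
      _ = ⟪U q, U p⟫ := real_inner_comm _ _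
      _ = ⟪S q, p⟫ := (hS q p).symm
      _ = ⟪p, S q⟫ := real_inner_comm _ _
  have hSv : ∀ v : H, A * ‖v‖ ^ 2 ≤ ⟪S v, v⟫ := by
    intro v
    rw [hS, real_inner_self_eq_norm_sq, ← htsum]
    exact (hframe v).1
  have hSlow : ∀ v : H, A * ‖v‖ ≤ ‖S v‖ := by
    intro v
    rcases eq_or_ne ‖v‖ 0 with h0 | h0
    · rw [h0, mul_zero]; exact norm_nonneg _
    · have hpos : 0 < ‖v‖ := lt_of_le_of_ne (norm_nonneg v) (Ne.symm h0)
      have h1 : A * ‖v‖ ^ 2 ≤ ⟪S v, v⟫ := hSv v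
      have h2 : ⟪S v, v⟫ ≤ ‖S v‖ * ‖v‖ := real_inner_le_norm _ _
      nlinarith
  have hSinj : S.ker = ⊥ := by
    rw [LinearMap.ker_eq_bot]
    intro a b hab
    have h1 : S (a - b) = 0 := by rw [map_sub, show S a = S b from hab, sub_self]
    have h2 : A * ‖a - b‖ ≤ 0 := by simpa [h1] using hSlow (a - b)
    have h3 : ‖a - b‖ = 0 := by
      by_contra h
      have hp : 0 < ‖a - b‖ := lt_of_le_of_ne (norm_nonneg _) (Ne.symm h)
      nlinarith
    exact sub_eq_zero.mp (norm_eq_zero.mp h3)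
  have hSsurj : S.range = ⊤ := by
    have hclosed : IsClosed (Set.range S) := by
      have hanti : AntilipschitzWith (⟨A, hA.le⟩ : NNReal)⁻¹ S := by
        apply ContinuousLinearMap.antilipschitz_of_bound
        intro v
        change ‖v‖ ≤ A⁻¹ * ‖S v‖
        rw [inv_mul_eq_div, le_div_iff₀ hA, mul_comm]
        exact hSlow v
      exact hanti.isClosed_range S.uniformContinuous
    have hdense : S.rangeᗮ = ⊥ := by
      rw [Submodule.eq_bot_iff]
      intro v hv
      have h0 : ⟪S v, v⟫ = 0 :=
        hv (S v) (LinearMap.mem_range_self _ v)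
      have h1 := hSv v
      rw [h0] at h1
      have : ‖v‖ = 0 := by
        by_contra h
        have hp : 0 < ‖v‖ := lt_of_le_of_ne (norm_nonneg _) (Ne.symm h)
        nlinarith [mul_pos hA (mul_pos hp hp)]
      exact norm_eq_zero.mp this
    have h2 : S.range.topologicalClosure = ⊤ :=
      Submodule.topologicalClosure_eq_top_iff.mpr hdense
    have h3 : S.range.topologicalClosure = S.range := by
      apply IsClosed.submodule_topologicalClosure_eq
      simpa [LinearMap.coe_range] using hclosed
    rw [← h3, h2]
  set Se : H ≃L[ℝ] H := ContinuousLinearEquiv.ofBijective S hSinj hSsurj with hSe'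
  have hSe : ∀ v : H, Se v = S v := fun v => rfl
  have hSes : ∀ v : H, S (Se.symm v) = v := by
    intro v
    rw [← hSe, Se.apply_symm_apply]
  -- the map T = U ∘ S⁻¹ and its inverse U†
  set V : H →L[ℝ] lp (fun _ : ℕ => ℝ) 2 := U.comp (Se.symm : H →L[ℝ] H) with hVdef
  have hV : ∀ v : H, V v = U (Se.symm v) := fun v => rfl
  have hadjU : ∀ v : H, (ContinuousLinearMap.adjoint U) (U v) = S v := fun v => rfl
  have hadjV : ∀ v : H, (ContinuousLinearMap.adjoint U) (V v) = v := by
    intro v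
    rw [hV, hadjU, hSes]
  have hSesymm : ∀ a b : H, ⟪a, Se.symm b⟫ = ⟪Se.symm a, b⟫ := by
    intro a b
    calc ⟪a, Se.symm b⟫ = ⟪S (Se.symm a), Se.symm b⟫ := by rw [hSes]
      _ = ⟪Se.symm a, S (Se.symm b)⟫ := hSsymm _ _
      _ = ⟪Se.symm a, b⟫ := by rw [hSes]
  -- norm bounds for V
  have hVb : ∀ v : H, ‖V v‖ ≤ (Real.sqrt A)⁻¹ * ‖v‖ := by
    intro v
    set w : H := Se.symm v with hw
    have hSw : S w = v := hSes v
    have h1 : ‖U w‖ ^ 2 = ⟪S w, w⟫ := by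
      rw [hS, real_inner_self_eq_norm_sq]
    have h2 : ⟪S w, w⟫ ≤ ‖S w‖ * ‖w‖ := real_inner_le_norm _ _
    have h3 : Real.sqrt A * ‖w‖ ≤ ‖U w‖ := hUa w
    have key : Real.sqrt A * ‖U w‖ * ‖U w‖ ≤ ‖S w‖ * ‖U w‖ := by
      calc Real.sqrt A * ‖U w‖ * ‖U w‖ = Real.sqrt A * ‖U w‖ ^ 2 := by ring
        _ ≤ Real.sqrt A * (‖S w‖ * ‖w‖) := by
            rw [h1]; exact mul_le_mul_of_nonneg_left h2 hsA.le
        _ = ‖S w‖ * (Real.sqrt A * ‖w‖) := by ring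
        _ ≤ ‖S w‖ * ‖U w‖ := mul_le_mul_of_nonneg_left h3 (norm_nonneg _)
    have hVU : ‖V v‖ = ‖U w‖ := by rw [hV]
    rcases eq_or_ne ‖U w‖ 0 with h0 | h0
    · rw [hVU, h0]
      positivity
    · have hpos : 0 < ‖U w‖ := lt_of_le_of_ne (norm_nonneg _) (Ne.symm h0)
      have h4 : Real.sqrt A * ‖U w‖ ≤ ‖S w‖ := le_of_mul_le_mul_right key hpos
      rw [hVU, ← hSw]
      calc ‖U w‖ = (Real.sqrt A)⁻¹ * (Real.sqrt A * ‖U w‖) := by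
            field_simp
        _ ≤ (Real.sqrt A)⁻¹ * ‖S w‖ :=
            mul_le_mul_of_nonneg_left h4 (inv_nonneg.mpr hsA.le)
  have hVa : ∀ v : H, ‖v‖ ≤ Real.sqrt B * ‖V v‖ := by
    intro v
    set w : H := Se.symm v with hw
    have hSw : S w = v := hSes v
    have h1 : ‖S w‖ ^ 2 = ⟪U w, U (S w)⟫ := by
      rw [← hS, real_inner_self_eq_norm_sq]
    have h2 : ⟪U w, U (S w)⟫ ≤ ‖U w‖ * ‖U (S w)‖ := real_inner_le_norm _ _
    have h3 : ‖U (S w)‖ ≤ Real.sqrt B * ‖S w‖ := hUb _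
    have hVU : ‖V v‖ = ‖U w‖ := by rw [hV]
    rcases eq_or_ne ‖S w‖ 0 with h0 | h0
    · rw [← hSw, h0]
      positivity
    · have hpos : 0 < ‖S w‖ := lt_of_le_of_ne (norm_nonneg _) (Ne.symm h0)
      have key : ‖S w‖ * ‖S w‖ ≤ (Real.sqrt B * ‖U w‖) * ‖S w‖ := by
        calc ‖S w‖ * ‖S w‖ = ‖S w‖ ^ 2 := by ring
          _ ≤ ‖U w‖ * ‖U (S w)‖ := h1 ▸ h2
          _ ≤ ‖U w‖ * (Real.sqrt B * ‖S w‖) :=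
              mul_le_mul_of_nonneg_left h3 (norm_nonneg _)
          _ = (Real.sqrt B * ‖U w‖) * ‖S w‖ := by ring
      have h4 : ‖S w‖ ≤ Real.sqrt B * ‖U w‖ := le_of_mul_le_mul_right key hpos
      rw [hVU, ← hSw]
      exact h4
  -- the closed span is everything
  set M : Submodule ℝ H := (Submodule.span ℝ (Set.range x)).topologicalClosure with hM
  have hMtop : M = ⊤ := by
    rw [hM]
    apply Submodule.topologicalClosure_eq_top_iff.mpr
    rw [Submodule.eq_bot_iff]
    intro v hv
    have h0 : ∀ n, ⟪v, x n⟫ = 0 := by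
      intro n
      rw [real_inner_comm]
      exact hv (x n) (Submodule.subset_span (Set.mem_range_self n))
    have h1 := (hframe v).1
    have h2 : ∑' n, ⟪v, x n⟫ ^ 2 = 0 := by simp [h0]
    rw [h2] at h1
    have : ‖v‖ = 0 := by
      by_contra h
      have hp : 0 < ‖v‖ := lt_of_le_of_ne (norm_nonneg _) (Ne.symm h)
      nlinarith [mul_pos hA (mul_pos hp hp)]
    exact norm_eq_zero.mp this
  have hmemM : ∀ h : H, h ∈ M := fun h => hMtop ▸ Submodule.mem_top
  set K : Submodule ℝ (lp (fun _ : ℕ => ℝ) 2) := V.range with hK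
  -- construct the equivalence
  set Te : M ≃ₗ[ℝ] K :=
    { toFun := fun v => ⟨V v.1, LinearMap.mem_range_self _ v.1⟩
      map_add' := fun a b => Subtype.ext (by simp)
      map_smul' := fun c a => Subtype.ext (by simp)
      invFun := fun w => ⟨(ContinuousLinearMap.adjoint U) w.1, hmemM _⟩
      left_inv := fun v => Subtype.ext (hadjV v.1)
      right_inv := fun w => by
        obtain ⟨u, hu : V u = w.1⟩ := w.2
        apply Subtype.ext
        show V ((ContinuousLinearMap.adjoint U) w.1) = w.1
        rw [← hu, hadjV] } with hTe
  set T : M ≃L[ℝ] K :=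
    { Te with
      continuous_toFun := Continuous.subtype_mk
        (V.continuous.comp continuous_subtype_val) _
      continuous_invFun := Continuous.subtype_mk
        ((ContinuousLinearMap.adjoint U).continuous.comp continuous_subtype_val) _ } with hT
  have hTapp : ∀ v : M, (T v : lp (fun _ : ℕ => ℝ) 2) = V v.1 := fun v => rfl
  have hTsymm : ∀ w : K, ((T.symm w : M) : H) = (ContinuousLinearMap.adjoint U) w.1 :=
    fun w => rfl
  refine ⟨K, fun n => T ⟨x n, Submodule.le_topologicalClosure _
      (Submodule.subset_span (Set.mem_range_self n))⟩, T, ?_, fun n => rfl, ?_⟩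
  · -- tightness
    intro w
    obtain ⟨u, hu : V u = w.1⟩ := w.2
    set z : H := Se.symm ((ContinuousLinearMap.adjoint U) w.1) with hz
    have h1 : ∀ n : ℕ, ⟪w, T ⟨x n, Submodule.le_topologicalClosure _
        (Submodule.subset_span (Set.mem_range_self n))⟩⟫ = ⟪z, x n⟫ := by
      intro n
      have : ⟪w, T ⟨x n, Submodule.le_topologicalClosure _
          (Submodule.subset_span (Set.mem_range_self n))⟩⟫
          = ⟪(w : lp (fun _ : ℕ => ℝ) 2), U (Se.symm (x n))⟫ := by
        rw [Submodule.coe_inner, hTapp, hV]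
      rw [this, ← ContinuousLinearMap.adjoint_inner_left U, hSesymm]
    have h2 : ∑' n, ⟪w, T ⟨x n, Submodule.le_topologicalClosure _
        (Submodule.subset_span (Set.mem_range_self n))⟩⟫ ^ 2 = ∑' n, ⟪z, x n⟫ ^ 2 :=
      tsum_congr fun n => by rw [h1]
    have h3 : U z = (w : lp (fun _ : ℕ => ℝ) 2) := by
      have : z = Se.symm ((ContinuousLinearMap.adjoint U) (V u)) := by rw [hz, hu]
      rw [this, hadjV, ← hV, hu]
    rw [h2, htsum, h3]
    rw [Submodule.coe_norm]
  · -- norm bound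
    have hTn : ‖(T : M →L[ℝ] K)‖ ≤ (Real.sqrt A)⁻¹ := by
      apply ContinuousLinearMap.opNorm_le_bound _ (inv_nonneg.mpr hsA.le)
      intro v
      have : ‖(T : M →L[ℝ] K) v‖ = ‖V (v : H)‖ := by
        rw [ContinuousLinearEquiv.coe_coe, Submodule.coe_norm, hTapp]
      rw [this, Submodule.coe_norm]
      exact hVb _
    have hTsn : ‖(T.symm : K →L[ℝ] M)‖ ≤ Real.sqrt B := by
      apply ContinuousLinearMap.opNorm_le_bound _ (Real.sqrt_nonneg B)
      intro w
      obtain ⟨u, hu : V u = w.1⟩ := w.2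
      have h1 : ‖(T.symm : K →L[ℝ] M) w‖ = ‖u‖ := by
        rw [ContinuousLinearEquiv.coe_coe, Submodule.coe_norm, hTsymm, ← hu, hadjV]
      have h2 : ‖(w : lp (fun _ : ℕ => ℝ) 2)‖ = ‖V u‖ := by rw [hu]
      rw [h1, Submodule.coe_norm, h2]
      exact hVa u
    calc ‖(T : M →L[ℝ] K)‖ * ‖(T.symm : K →L[ℝ] M)‖
        ≤ (Real.sqrt A)⁻¹ * Real.sqrt B :=
          mul_le_mul hTn hTsn (norm_nonneg ((T.symm : K →L[ℝ] M))) (inv_nonneg.mpr hsA.le)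
      _ = Real.sqrt (B / A) := by
          rw [Real.sqrt_div hB.le, div_eq_mul_inv, mul_comm]
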